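/- Let g : [0,∞) → ℝ be of class C^{2n}, let β ≥ 0 and γ ≥ β²/4, and define ψ_g(x) = g(x + β√x + γ) + g(x − β√x + γ) for x ≥ 0. Then ψ_g is of class C^n on [0,∞) and its n-th derivative satisfies ψ_g^{(n)}(x) = ψ_{g^{(n)}}(x) + ∑_{j=1}^{n} C(n, j) β^{2j} ∫_0^1 g^{(n+j)}(x + β(2u−1)√x + γ) · (u − u²)^{j−1}/(j−1)! du. -/

import Mathlib

open Set Real MeasureTheory intervalIntegral Filter Topology

noncomputable section

namespace Stmt6Aux

/-- The inner map. -/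
def φ (β γ x u : ℝ) : ℝ := x + β * (2 * u - 1) * Real.sqrt x + γ

lemma phi_nonneg {β γ : ℝ} (hβ : 0 ≤ β) (hγ : β ^ 2 / 4 ≤ γ) {x : ℝ} (hx : 0 ≤ x) {u : ℝ}
    (hu : u ∈ Icc (0:ℝ) 1) : 0 ≤ φ β γ x u := by
  have h0 : 0 ≤ Real.sqrt x := Real.sqrt_nonneg x
  have hs : Real.sqrt x ^ 2 = x := Real.sq_sqrt hx
  have := mul_nonneg (mul_nonneg hβ h0) hu.1
  unfold φ
  nlinarith [sq_nonneg (Real.sqrt x - β / 2), hu.2]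

lemma phi_cont_x (β γ u : ℝ) : Continuous fun x => φ β γ x u := by
  unfold φ
  exact (continuous_id.add (continuous_const.mul Real.continuous_sqrt)).add continuous_const

lemma phi_cont_u (β γ x : ℝ) : Continuous fun u => φ β γ x u := by
  unfold φ
  fun_prop

lemma phi_hasDerivAt_u (β γ x u : ℝ) :
    HasDerivAt (fun u => φ β γ x u) (2 * β * Real.sqrt x) u := by
  have h : HasDerivAt (fun u : ℝ => β * (2 * u - 1)) (β * 2) u := by
    simpa using (((hasDerivAt_id u).const_mul (2:ℝ)).sub_const 1).const_mul β
  have := ((h.mul_const (Real.sqrt x)).const_add x).add_const γ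
  exact this.congr_deriv (by ring)

lemma phi_hasDerivAt_x (β γ u : ℝ) {x : ℝ} (hx : 0 < x) :
    HasDerivAt (fun x => φ β γ x u)
      (1 + β * (2 * u - 1) * (1 / (2 * Real.sqrt x))) x := by
  have h := (Real.hasDerivAt_sqrt (ne_of_gt hx)).const_mul (β * (2 * u - 1))
  exact ((hasDerivAt_id x).add h).add_const γ

end Stmt6Aux

namespace Stmt6Aux

variable {β γ : ℝ}

/-- A uniform bound for `f ∘ φ` on a compact slab. -/
lemma exists_bound (hβ : 0 ≤ β) (hγ : β ^ 2 / 4 ≤ γ) (f : ℝ → ℝ)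
    (hf : ContinuousOn f (Ici 0)) (x₀ : ℝ) :
    ∃ C : ℝ, 0 ≤ C ∧ ∀ x, 0 ≤ x → x ≤ x₀ + 1 → ∀ u ∈ Icc (0:ℝ) 1,
      |f (φ β γ x u)| ≤ C := by
  set R : ℝ := x₀ + 1 + β * Real.sqrt (x₀ + 1) + |γ| with hR
  obtain ⟨C, hC⟩ := isCompact_Icc.exists_bound_of_continuousOn
    (hf.mono (Icc_subset_Ici_self : Icc (0:ℝ) R ⊆ Ici 0))
  refine ⟨max C 0, le_max_right _ _, fun x hx hx' u hu => ?_⟩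
  have hmem : φ β γ x u ∈ Icc (0:ℝ) R := by
    refine ⟨phi_nonneg hβ hγ hx hu, ?_⟩
    have h1 : Real.sqrt x ≤ Real.sqrt (x₀ + 1) := Real.sqrt_le_sqrt hx'
    have h0 : 0 ≤ Real.sqrt x := Real.sqrt_nonneg x
    have h2 : β * (2 * u - 1) * Real.sqrt x ≤ β * Real.sqrt (x₀ + 1) := by
      have : β * (2 * u - 1) * Real.sqrt x ≤ β * Real.sqrt x := by
        nlinarith [hu.1, hu.2, mul_nonneg hβ h0]
      nlinarith [mul_le_mul_of_nonneg_left h1 hβ]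
    have h3 : γ ≤ |γ| := le_abs_self γ
    unfold φ; rw [hR]; linarith
  exact le_trans (hC _ hmem) (le_max_left _ _)

/-- Continuity in `u` of the integrand. -/
lemma cont_integrand (hβ : 0 ≤ β) (hγ : β ^ 2 / 4 ≤ γ) {f : ℝ → ℝ}
    (hf : ContinuousOn f (Ici 0)) {x : ℝ} (hx : 0 ≤ x) {w : ℝ → ℝ} (hw : Continuous w) :
    ContinuousOn (fun u => f (φ β γ x u) * w u) (Icc (0:ℝ) 1) := by
  refine ContinuousOn.mul ?_ hw.continuousOn
  exact hf.comp (phi_cont_u β γ x).continuousOn fun u hu => phi_nonneg hβ hγ hx hu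

/-- Continuity in `x` of the integrand, within `Ici 0`. -/
lemma cont_integrand_x (hβ : 0 ≤ β) (hγ : β ^ 2 / 4 ≤ γ) {f : ℝ → ℝ}
    (hf : ContinuousOn f (Ici 0)) {u : ℝ} (hu : u ∈ Icc (0:ℝ) 1) :
    ContinuousOn (fun x => f (φ β γ x u)) (Ici 0) :=
  hf.comp (phi_cont_x β γ u).continuousOn fun x hx => phi_nonneg hβ hγ hx hu

lemma integrable_integrand (hβ : 0 ≤ β) (hγ : β ^ 2 / 4 ≤ γ) {f : ℝ → ℝ}
    (hf : ContinuousOn f (Ici 0)) {x : ℝ} (hx : 0 ≤ x) {w : ℝ → ℝ} (hw : Continuous w) :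
    IntervalIntegrable (fun u => f (φ β γ x u) * w u) volume 0 1 := by
  apply ContinuousOn.intervalIntegrable
  rw [uIcc_of_le (zero_le_one)]
  exact cont_integrand hβ hγ hf hx hw

/-- Continuity of the parametrized integral on `Ici 0`. -/
lemma contT (hβ : 0 ≤ β) (hγ : β ^ 2 / 4 ≤ γ) {f : ℝ → ℝ}
    (hf : ContinuousOn f (Ici 0)) {w : ℝ → ℝ} (hw : Continuous w) :
    ContinuousOn (fun x => ∫ u in (0:ℝ)..1, f (φ β γ x u) * w u) (Ici 0) := by
  intro x₀ hx₀
  obtain ⟨C, hC0, hC⟩ := exists_bound hβ hγ f hf x₀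
  obtain ⟨Cw, hCw⟩ := isCompact_Icc.exists_bound_of_continuousOn
    (hw.continuousOn : ContinuousOn w (Icc (0:ℝ) 1))
  have hIoc : Set.uIoc (0:ℝ) 1 = Ioc 0 1 := uIoc_of_le zero_le_one
  apply intervalIntegral.continuousWithinAt_of_dominated_interval
    (bound := fun _ => C * Cw)
  · filter_upwards [self_mem_nhdsWithin] with x hx
    rw [hIoc]
    exact ((cont_integrand hβ hγ hf hx hw).mono Ioc_subset_Icc_self).aestronglyMeasurable
      measurableSet_Ioc
  · have hnear : Icc (x₀ - 1) (x₀ + 1) ∈ 𝓝[Ici 0] x₀ :=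
      mem_nhdsWithin_of_mem_nhds (Icc_mem_nhds (by linarith) (by linarith))
    filter_upwards [self_mem_nhdsWithin, hnear] with x hx hx'
    refine ae_of_all _ fun u hu => ?_
    rw [hIoc] at hu
    have hu' : u ∈ Icc (0:ℝ) 1 := Ioc_subset_Icc_self hu
    rw [norm_mul]
    exact mul_le_mul (hC x hx hx'.2 u hu') (hCw u hu') (norm_nonneg _) hC0
  · exact intervalIntegrable_const
  · refine ae_of_all _ fun u hu => ?_
    rw [hIoc] at hu
    exact ((cont_integrand_x hβ hγ hf (Ioc_subset_Icc_self hu)).continuousWithinAt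
      hx₀).mul continuousWithinAt_const

end Stmt6Aux

namespace Stmt6Aux

variable {β γ : ℝ}

/-- Chain rule in `x` for `f ∘ φ`, at interior points. -/
lemma comp_hasDerivAt (hβ : 0 ≤ β) (hγ : β ^ 2 / 4 ≤ γ) {f f' : ℝ → ℝ}
    (hd : ∀ y ∈ Ici (0:ℝ), HasDerivWithinAt f (f' y) (Ici 0) y)
    {u : ℝ} (hu : u ∈ Icc (0:ℝ) 1) {x : ℝ} (hx : 0 < x) :
    HasDerivAt (fun x => f (φ β γ x u))
      (f' (φ β γ x u) * (1 + β * (2 * u - 1) * (1 / (2 * Real.sqrt x)))) x := by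
  have hmem : φ β γ x u ∈ Ici (0:ℝ) := phi_nonneg hβ hγ hx.le hu
  have hin := phi_hasDerivAt_x β γ u (x := x) hx
  have hcomp : HasDerivWithinAt (f ∘ fun x => φ β γ x u)
      (f' (φ β γ x u) * (1 + β * (2 * u - 1) * (1 / (2 * Real.sqrt x)))) (Ici 0) x :=
    (hd _ hmem).comp x hin.hasDerivWithinAt fun y hy => phi_nonneg hβ hγ hy hu
  exact hcomp.hasDerivAt (Ici_mem_nhds hx)

/-- Chain rule in `u` for `f ∘ φ`, within `Icc 0 1`. -/
lemma comp_hasDerivAt_u (hβ : 0 ≤ β) (hγ : β ^ 2 / 4 ≤ γ) {f f' : ℝ → ℝ}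
    (hd : ∀ y ∈ Ici (0:ℝ), HasDerivWithinAt f (f' y) (Ici 0) y)
    {x : ℝ} (hx : 0 ≤ x) {u : ℝ} (hu : u ∈ Icc (0:ℝ) 1) :
    HasDerivWithinAt (fun u => f (φ β γ x u))
      (f' (φ β γ x u) * (2 * β * Real.sqrt x)) (Icc 0 1) u := by
  have hmem : φ β γ x u ∈ Ici (0:ℝ) := phi_nonneg hβ hγ hx hu
  exact (hd _ hmem).comp u (phi_hasDerivAt_u β γ x u).hasDerivWithinAt
    fun v hv => phi_nonneg hβ hγ hx hv

/-- Differentiation under the integral sign, at interior points. -/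
lemma hasDerivAt_integral (hβ : 0 ≤ β) (hγ : β ^ 2 / 4 ≤ γ) {f f' : ℝ → ℝ}
    (hf : ContinuousOn f (Ici 0)) (hf' : ContinuousOn f' (Ici 0))
    (hd : ∀ y ∈ Ici (0:ℝ), HasDerivWithinAt f (f' y) (Ici 0) y)
    {w : ℝ → ℝ} (hw : Continuous w) {x₀ : ℝ} (hx₀ : 0 < x₀) :
    HasDerivAt (fun x => ∫ u in (0:ℝ)..1, f (φ β γ x u) * w u)
      (∫ u in (0:ℝ)..1,
        f' (φ β γ x₀ u) * (1 + β * (2 * u - 1) * (1 / (2 * Real.sqrt x₀))) * w u) x₀ := by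
  obtain ⟨C, hC0, hC⟩ := exists_bound hβ hγ f' hf' x₀
  obtain ⟨Cw, hCw⟩ := isCompact_Icc.exists_bound_of_continuousOn
    (hw.continuousOn : ContinuousOn w (Icc (0:ℝ) 1))
  have hCw0 : 0 ≤ Cw := le_trans (norm_nonneg _) (hCw 0 (by norm_num))
  have hIoc : Set.uIoc (0:ℝ) 1 = Ioc 0 1 := uIoc_of_le zero_le_one
  set ε : ℝ := min (x₀ / 2) 1 with hε
  have hε0 : 0 < ε := lt_min (by linarith) one_pos
  have hs0 : 0 < Real.sqrt (x₀ / 2) := Real.sqrt_pos.2 (by linarith)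
  set B : ℝ := 1 + β * (1 / (2 * Real.sqrt (x₀ / 2))) with hB
  have hB0 : 0 ≤ B := by positivity
  have hball : ∀ x ∈ Metric.ball x₀ ε, x₀ / 2 ≤ x ∧ x ≤ x₀ + 1 := by
    intro x hx
    rw [Metric.mem_ball, Real.dist_eq, abs_lt] at hx
    constructor
    · have := min_le_left (x₀ / 2) 1; linarith [hx.1]
    · have := min_le_right (x₀ / 2) 1; linarith [hx.2]
  refine (intervalIntegral.hasDerivAt_integral_of_dominated_loc_of_deriv_le
    (F := fun x u => f (φ β γ x u) * w u)
    (F' := fun x u => f' (φ β γ x u) * (1 + β * (2 * u - 1) * (1 / (2 * Real.sqrt x))) * w u)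
    (bound := fun _ => C * B * Cw) (μ := volume) (a := 0) (b := 1) (x₀ := x₀) (Metric.ball_mem_nhds x₀ hε0)
    ?_ ?_ ?_ ?_ ?_ ?_).2
  · filter_upwards [Ioi_mem_nhds hx₀] with x hx
    rw [hIoc]
    exact ((cont_integrand hβ hγ hf (le_of_lt hx) hw).mono
      Ioc_subset_Icc_self).aestronglyMeasurable measurableSet_Ioc
  · exact integrable_integrand hβ hγ hf hx₀.le hw
  · rw [hIoc]
    refine ContinuousOn.aestronglyMeasurable ?_ measurableSet_Ioc
    refine ContinuousOn.mono ?_ (Ioc_subset_Icc_self : Ioc (0:ℝ) 1 ⊆ Icc 0 1)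
    exact ((cont_integrand hβ hγ hf' hx₀.le hw).mul
      (by fun_prop : Continuous fun u : ℝ =>
        (1 + β * (2 * u - 1) * (1 / (2 * Real.sqrt x₀)))).continuousOn).congr
      (fun u _ => by simp only [Pi.mul_apply]; ring)
  · refine ae_of_all _ fun u hu x hx => ?_
    rw [hIoc] at hu
    have hu' : u ∈ Icc (0:ℝ) 1 := Ioc_subset_Icc_self hu
    obtain ⟨hx1, hx2⟩ := hball x hx
    have hxpos : 0 < x := lt_of_lt_of_le (by linarith) hx1
    have hsx : Real.sqrt (x₀ / 2) ≤ Real.sqrt x := Real.sqrt_le_sqrt hx1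
    have hsxpos : 0 < Real.sqrt x := lt_of_lt_of_le hs0 hsx
    have habs : |1 + β * (2 * u - 1) * (1 / (2 * Real.sqrt x))| ≤ B := by
      have h1 : |β * (2 * u - 1) * (1 / (2 * Real.sqrt x))|
          ≤ β * (1 / (2 * Real.sqrt (x₀ / 2))) := by
        rw [abs_mul, abs_mul, abs_of_nonneg hβ,
          abs_of_nonneg (by positivity : (0:ℝ) ≤ 1 / (2 * Real.sqrt x))]
        have h2u : |2 * u - 1| ≤ 1 := abs_le.2 ⟨by linarith [hu'.1], by linarith [hu'.2]⟩
        have hdiv : 1 / (2 * Real.sqrt x) ≤ 1 / (2 * Real.sqrt (x₀ / 2)) := by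
          apply one_div_le_one_div_of_le (by positivity)
          linarith
        calc β * |2 * u - 1| * (1 / (2 * Real.sqrt x))
            ≤ β * 1 * (1 / (2 * Real.sqrt (x₀ / 2))) := by
              apply mul_le_mul (mul_le_mul le_rfl h2u (abs_nonneg _) hβ) hdiv
                (by positivity) (by positivity)
          _ = β * (1 / (2 * Real.sqrt (x₀ / 2))) := by ring
      calc |1 + β * (2 * u - 1) * (1 / (2 * Real.sqrt x))|
          ≤ |1| + |β * (2 * u - 1) * (1 / (2 * Real.sqrt x))| := abs_add_le _ _
        _ ≤ 1 + β * (1 / (2 * Real.sqrt (x₀ / 2))) := by rw [abs_one]; linarith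
    rw [norm_mul, norm_mul]
    have h1 : ‖f' (φ β γ x u)‖ * ‖1 + β * (2 * u - 1) * (1 / (2 * Real.sqrt x))‖ ≤ C * B := by
      simp only [Real.norm_eq_abs]
      exact mul_le_mul (hC x hxpos.le hx2 u hu') habs (abs_nonneg _) hC0
    exact mul_le_mul h1 (hCw u hu') (norm_nonneg _) (by positivity)
  · exact intervalIntegrable_const
  · refine ae_of_all _ fun u hu x hx => ?_
    rw [hIoc] at hu
    have hu' : u ∈ Icc (0:ℝ) 1 := Ioc_subset_Icc_self hu
    obtain ⟨hx1, hx2⟩ := hball x hx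
    have hxpos : 0 < x := lt_of_lt_of_le (by linarith) hx1
    exact (comp_hasDerivAt hβ hγ hd hu' hxpos).mul_const (w u)

end Stmt6Aux

namespace Stmt6Aux

variable {β γ : ℝ}

/-- FTC in the `u` variable, against a weight `P`. -/
lemma ftc_weight (hβ : 0 ≤ β) (hγ : β ^ 2 / 4 ≤ γ) {f' f'' : ℝ → ℝ}
    (hf' : ContinuousOn f' (Ici 0)) (hf'' : ContinuousOn f'' (Ici 0))
    (hd2 : ∀ y ∈ Ici (0:ℝ), HasDerivWithinAt f' (f'' y) (Ici 0) y)
    {x : ℝ} (hx : 0 ≤ x) {P P' : ℝ → ℝ} (hP : ∀ u, HasDerivAt P (P' u) u)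
    (hPc : Continuous P) (hP'c : Continuous P') :
    ∫ u in (0:ℝ)..1,
        (f'' (φ β γ x u) * (2 * β * Real.sqrt x) * P u + f' (φ β γ x u) * P' u)
      = f' (φ β γ x 1) * P 1 - f' (φ β γ x 0) * P 0 := by
  have hderiv : ∀ u ∈ Icc (0:ℝ) 1,
      HasDerivWithinAt (fun u => f' (φ β γ x u) * P u)
        (f'' (φ β γ x u) * (2 * β * Real.sqrt x) * P u + f' (φ β γ x u) * P' u)
        (Icc 0 1) u := fun u hu =>
    (comp_hasDerivAt_u hβ hγ hd2 hx hu).mul (hP u).hasDerivWithinAt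
  have hcont : ContinuousOn (fun u => f' (φ β γ x u) * P u) (Icc (0:ℝ) 1) :=
    cont_integrand hβ hγ hf' hx hPc
  have hint : IntervalIntegrable
      (fun u => f'' (φ β γ x u) * (2 * β * Real.sqrt x) * P u + f' (φ β γ x u) * P' u)
      volume 0 1 := by
    apply ContinuousOn.intervalIntegrable
    rw [uIcc_of_le zero_le_one]
    exact (((cont_integrand hβ hγ hf'' hx continuous_const).mul
      hPc.continuousOn)).add (cont_integrand hβ hγ hf' hx hP'c)
  exact intervalIntegral.integral_eq_sub_of_hasDeriv_right_of_le zero_le_one hcont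
    (fun t ht => (hderiv t (Ioo_subset_Icc_self ht)).mono_of_mem_nhdsWithin
      (Icc_mem_nhdsGT_of_mem ⟨ht.1.le, ht.2⟩)) hint

/-- Extension from interior derivatives plus continuity to `HasDerivWithinAt` on `Ici 0`. -/
lemma ext_deriv {F G : ℝ → ℝ} (hF : ContinuousOn F (Ici 0)) (hG : ContinuousOn G (Ici 0))
    (h : ∀ x : ℝ, 0 < x → HasDerivAt F (G x) x) :
    ∀ x ∈ Ici (0:ℝ), HasDerivWithinAt F (G x) (Ici 0) x := by
  intro x hx
  rcases eq_or_lt_of_le (mem_Ici.mp hx : (0:ℝ) ≤ x) with h0 | h0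
  · have hx0 : x = 0 := h0.symm
    subst hx0
    apply hasDerivWithinAt_Ici_of_tendsto_deriv (s := Ioi 0)
    · exact fun y hy => (h y hy).differentiableAt.differentiableWithinAt
    · exact (hF.continuousWithinAt hx).mono Ioi_subset_Ici_self
    · exact self_mem_nhdsWithin
    · have hG0 : Tendsto G (𝓝[>] (0:ℝ)) (𝓝 (G 0)) :=
        tendsto_nhdsWithin_mono_left Ioi_subset_Ici_self (hG.continuousWithinAt hx)
      apply hG0.congr'
      filter_upwards [self_mem_nhdsWithin] with y hy
      exact ((h y hy).deriv).symm
  · exact (h x h0).hasDerivWithinAt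

end Stmt6Aux

namespace Stmt6Aux

variable {β γ : ℝ}

lemma weight_cont (j : ℕ) : Continuous fun u : ℝ => (u - u ^ 2) ^ j :=
  (continuous_id.sub (continuous_pow 2)).pow j

/-- Integration by parts identity. -/
lemma ibp (hβ : 0 ≤ β) (hγ : β ^ 2 / 4 ≤ γ) {f' f'' : ℝ → ℝ}
    (hf' : ContinuousOn f' (Ici 0)) (hf'' : ContinuousOn f'' (Ici 0))
    (hd2 : ∀ y ∈ Ici (0:ℝ), HasDerivWithinAt f' (f'' y) (Ici 0) y)
    {j : ℕ} (hj : 1 ≤ j) {x : ℝ} (hx : 0 < x) :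
    (∫ u in (0:ℝ)..1, f' (φ β γ x u)
        * (1 + β * (2 * u - 1) * (1 / (2 * Real.sqrt x))) * (u - u ^ 2) ^ (j - 1))
      = (∫ u in (0:ℝ)..1, f' (φ β γ x u) * (u - u ^ 2) ^ (j - 1))
        + (β ^ 2 / (j : ℝ)) * ∫ u in (0:ℝ)..1, f'' (φ β γ x u) * (u - u ^ 2) ^ j := by
  have hs : 0 < Real.sqrt x := Real.sqrt_pos.2 hx
  have hsne : Real.sqrt x ≠ 0 := ne_of_gt hs
  have hjne : (j : ℝ) ≠ 0 := Nat.cast_ne_zero.2 (by omega)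
  -- the derivative of the weight (u - u^2)^j
  have hP : ∀ u : ℝ, HasDerivAt (fun u : ℝ => (u - u ^ 2) ^ j)
      ((j : ℝ) * (u - u ^ 2) ^ (j - 1) * (1 - 2 * u)) u := by
    intro u
    have h1 : HasDerivAt (fun u : ℝ => u - u ^ 2) (1 - 2 * u) u := by
      simpa using (hasDerivAt_id' u).fun_sub (hasDerivAt_pow 2 u)
    exact h1.pow j
  have hftc := ftc_weight hβ hγ hf' hf'' hd2 hx.le hP (weight_cont j)
    (by fun_prop)
  have hz1 : ((1:ℝ) - 1 ^ 2) ^ j = 0 := by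
    rw [show ((1:ℝ) - 1 ^ 2) = 0 by norm_num, zero_pow (by omega : j ≠ 0)]
  have hz0 : ((0:ℝ) - 0 ^ 2) ^ j = 0 := by
    rw [show ((0:ℝ) - 0 ^ 2) = 0 by norm_num, zero_pow (by omega : j ≠ 0)]
  rw [hz1, hz0, mul_zero, mul_zero, sub_zero] at hftc
  -- split the FTC integral
  have heq : ∀ u : ℝ, f'' (φ β γ x u) * (2 * β * Real.sqrt x) * (u - u ^ 2) ^ j
      + f' (φ β γ x u) * ((j : ℝ) * (u - u ^ 2) ^ (j - 1) * (1 - 2 * u))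
      = (2 * β * Real.sqrt x) * (f'' (φ β γ x u) * (u - u ^ 2) ^ j)
        + f' (φ β γ x u) * ((j : ℝ) * (u - u ^ 2) ^ (j - 1) * (1 - 2 * u)) :=
    fun u => by ring
  simp only [heq] at hftc
  have hInt3 : IntervalIntegrable
      (fun u => (2 * β * Real.sqrt x) * (f'' (φ β γ x u) * (u - u ^ 2) ^ j)) volume 0 1 :=
    (integrable_integrand hβ hγ hf'' hx.le (weight_cont j)).const_mul _
  have hInt2 : IntervalIntegrable
      (fun u => f' (φ β γ x u) * ((j : ℝ) * (u - u ^ 2) ^ (j - 1) * (1 - 2 * u)))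
      volume 0 1 :=
    integrable_integrand hβ hγ hf' hx.le (by fun_prop)
  rw [intervalIntegral.integral_add hInt3 hInt2, intervalIntegral.integral_const_mul] at hftc
  -- hftc : (2β√x) * A + B = 0
  set A := ∫ u in (0:ℝ)..1, f'' (φ β γ x u) * (u - u ^ 2) ^ j with hA
  set B := ∫ u in (0:ℝ)..1,
      f' (φ β γ x u) * ((j : ℝ) * (u - u ^ 2) ^ (j - 1) * (1 - 2 * u)) with hBdef
  have hBval : B = -(2 * β * Real.sqrt x) * A := by linarith
  -- now split the target integral
  have heq2 : ∀ u : ℝ, f' (φ β γ x u)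
      * (1 + β * (2 * u - 1) * (1 / (2 * Real.sqrt x))) * (u - u ^ 2) ^ (j - 1)
      = f' (φ β γ x u) * (u - u ^ 2) ^ (j - 1)
        + (-(β / (2 * Real.sqrt x * (j : ℝ))))
          * (f' (φ β γ x u) * ((j : ℝ) * (u - u ^ 2) ^ (j - 1) * (1 - 2 * u))) := by
    intro u
    field_simp
    ring
  have hInt1 : IntervalIntegrable
      (fun u => f' (φ β γ x u) * (u - u ^ 2) ^ (j - 1)) volume 0 1 :=
    integrable_integrand hβ hγ hf' hx.le (weight_cont (j - 1))
  simp only [heq2]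
  rw [intervalIntegral.integral_add hInt1 (hInt2.const_mul _),
    intervalIntegral.integral_const_mul, ← hBdef, hBval]
  have : -(β / (2 * Real.sqrt x * (j : ℝ))) * (-(2 * β * Real.sqrt x) * A)
      = (β ^ 2 / (j : ℝ)) * A := by
    field_simp
  rw [this]

end Stmt6Aux

namespace Stmt6Aux

variable {β γ : ℝ}

/-- Derivative (within `Ici 0`) of the integral term. -/
lemma hasDerivWithinAt_T (hβ : 0 ≤ β) (hγ : β ^ 2 / 4 ≤ γ) {f f' f'' : ℝ → ℝ}
    (hf : ContinuousOn f (Ici 0)) (hf' : ContinuousOn f' (Ici 0))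
    (hf'' : ContinuousOn f'' (Ici 0))
    (hd1 : ∀ y ∈ Ici (0:ℝ), HasDerivWithinAt f (f' y) (Ici 0) y)
    (hd2 : ∀ y ∈ Ici (0:ℝ), HasDerivWithinAt f' (f'' y) (Ici 0) y)
    {j : ℕ} (hj : 1 ≤ j) :
    ∀ x ∈ Ici (0:ℝ),
      HasDerivWithinAt (fun x => ∫ u in (0:ℝ)..1, f (φ β γ x u) * (u - u ^ 2) ^ (j - 1))
        ((∫ u in (0:ℝ)..1, f' (φ β γ x u) * (u - u ^ 2) ^ (j - 1))
          + (β ^ 2 / (j : ℝ)) * ∫ u in (0:ℝ)..1, f'' (φ β γ x u) * (u - u ^ 2) ^ j)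
        (Ici 0) x := by
  apply ext_deriv
  · exact contT hβ hγ hf (weight_cont (j - 1))
  · exact (contT hβ hγ hf' (weight_cont (j - 1))).add
      (continuousOn_const.mul (contT hβ hγ hf'' (weight_cont j)))
  · intro x hx
    have h := hasDerivAt_integral hβ hγ hf hf' hd1 (weight_cont (j - 1)) hx
    rwa [ibp hβ hγ hf' hf'' hd2 hj hx] at h

/-- Derivative (within `Ici 0`) of the symmetrized part. -/
lemma hasDerivWithinAt_psi (hβ : 0 ≤ β) (hγ : β ^ 2 / 4 ≤ γ) {f f' f'' : ℝ → ℝ}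
    (hf : ContinuousOn f (Ici 0)) (hf' : ContinuousOn f' (Ici 0))
    (hf'' : ContinuousOn f'' (Ici 0))
    (hd1 : ∀ y ∈ Ici (0:ℝ), HasDerivWithinAt f (f' y) (Ici 0) y)
    (hd2 : ∀ y ∈ Ici (0:ℝ), HasDerivWithinAt f' (f'' y) (Ici 0) y) :
    ∀ x ∈ Ici (0:ℝ),
      HasDerivWithinAt (fun x => f (φ β γ x 1) + f (φ β γ x 0))
        (f' (φ β γ x 1) + f' (φ β γ x 0)
          + β ^ 2 * ∫ u in (0:ℝ)..1, f'' (φ β γ x u) * (u - u ^ 2) ^ 0) (Ici 0) x := by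
  have h1m : (1:ℝ) ∈ Icc (0:ℝ) 1 := by norm_num
  have h0m : (0:ℝ) ∈ Icc (0:ℝ) 1 := by norm_num
  apply ext_deriv
  · exact (cont_integrand_x hβ hγ hf h1m).add (cont_integrand_x hβ hγ hf h0m)
  · exact ((cont_integrand_x hβ hγ hf' h1m).add (cont_integrand_x hβ hγ hf' h0m)).add
      (continuousOn_const.mul (contT hβ hγ hf'' (weight_cont 0)))
  · intro x hx
    have hs : 0 < Real.sqrt x := Real.sqrt_pos.2 hx
    have hsne : Real.sqrt x ≠ 0 := ne_of_gt hs
    have hadd := (comp_hasDerivAt hβ hγ hd1 h1m hx).add (comp_hasDerivAt hβ hγ hd1 h0m hx)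
    refine hadd.congr_deriv (Eq.symm ?_)
    have hftc := ftc_weight hβ hγ hf' hf'' hd2 hx.le (P := fun _ => (1:ℝ))
      (P' := fun _ => (0:ℝ)) (fun u => hasDerivAt_const u 1) continuous_const
      continuous_const
    have heq : ∀ u : ℝ, f'' (φ β γ x u) * (2 * β * Real.sqrt x) * (1:ℝ)
        + f' (φ β γ x u) * (0:ℝ)
        = (2 * β * Real.sqrt x) * (f'' (φ β γ x u) * (u - u ^ 2) ^ 0) := fun u => by
      rw [pow_zero]; ring
    simp only [heq] at hftc
    rw [intervalIntegral.integral_const_mul, mul_one, mul_one] at hftc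
    set I := ∫ u in (0:ℝ)..1, f'' (φ β γ x u) * (u - u ^ 2) ^ 0 with hI
    have key : β * (1 / (2 * Real.sqrt x)) * (2 * β * Real.sqrt x) = β ^ 2 := by
      field_simp
    linear_combination (β * (1 / (2 * Real.sqrt x))) * hftc - I * key

end Stmt6Aux

namespace Stmt6Aux

lemma sum_identity (β : ℝ) (m : ℕ) (v : ℕ → ℕ → ℝ) :
    β ^ 2 * v 1 (m + 2)
      + ∑ j ∈ Finset.Icc 1 m, ((m.choose j : ℝ) * β ^ (2 * j) / (Nat.factorial (j - 1)))
          * (v j (m + j + 1) + β ^ 2 / (j : ℝ) * v (j + 1) (m + j + 2))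
    = ∑ j ∈ Finset.Icc 1 (m + 1),
        (((m + 1).choose j : ℝ) * β ^ (2 * j) / (Nat.factorial (j - 1)))
          * v j (m + 1 + j) := by
  set W : ℕ → ℝ := fun i => v (i + 1) (m + i + 2) with hW
  set c : ℕ → ℝ := fun i => (m.choose (i + 1) : ℝ) * β ^ (2 * (i + 1)) / (Nat.factorial i)
    with hc
  set e : ℕ → ℝ := fun i => (m.choose i : ℝ) * β ^ (2 * (i + 1)) / (Nat.factorial i) with he
  have hIcc : ∀ (k : ℕ) (f : ℕ → ℝ),
      ∑ j ∈ Finset.Icc 1 k, f j = ∑ i ∈ Finset.range k, f (1 + i) := by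
    intro k f
    rw [← Finset.Ico_add_one_right_eq_Icc, Finset.sum_Ico_eq_sum_range]
    simp
  rw [hIcc, hIcc]
  have hfac : ∀ i : ℕ, ((Nat.factorial i : ℝ)) ≠ 0 :=
    fun i => Nat.cast_ne_zero.2 (Nat.factorial_ne_zero i)
  have hL : ∀ i ∈ Finset.range m,
      ((m.choose (1 + i) : ℝ) * β ^ (2 * (1 + i)) / (Nat.factorial ((1 + i) - 1)))
          * (v (1 + i) (m + (1 + i) + 1)
            + β ^ 2 / ((1 + i : ℕ) : ℝ) * v ((1 + i) + 1) (m + (1 + i) + 2))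
      = c i * W i + (c i * (β ^ 2 / ((i + 1 : ℕ) : ℝ))) * W (i + 1) := by
    intro i _
    rw [show (1 + i) - 1 = i from by omega, show m + (1 + i) + 1 = m + i + 2 from by omega,
      show (1 + i) + 1 = (i + 1) + 1 from by omega,
      show m + (1 + i) + 2 = m + (i + 1) + 2 from by omega,
      show 1 + i = i + 1 from by omega]
    simp only [hW, hc]
    ring
  rw [Finset.sum_congr rfl hL, Finset.sum_add_distrib]
  have hshift : ∑ i ∈ Finset.range m, (c i * (β ^ 2 / ((i + 1 : ℕ) : ℝ))) * W (i + 1)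
      = (∑ i ∈ Finset.range (m + 1), e i * W i) - e 0 * W 0 := by
    rw [Finset.sum_range_succ']
    have : ∀ i ∈ Finset.range m,
        (c i * (β ^ 2 / ((i + 1 : ℕ) : ℝ))) * W (i + 1) = e (i + 1) * W (i + 1) := by
      intro i _
      simp only [hc, he]
      rw [Nat.factorial_succ, show 2 * (i + 1 + 1) = 2 * (i + 1) + 2 from by ring, pow_add]
      push_cast
      field_simp
    rw [Finset.sum_congr rfl this]
    ring
  rw [hshift]
  have he0 : e 0 * W 0 = β ^ 2 * v 1 (m + 2) := by
    simp [he, hW, Nat.factorial]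
  have hR : ∀ i ∈ Finset.range (m + 1),
      (((m + 1).choose (1 + i) : ℝ) * β ^ (2 * (1 + i)) / (Nat.factorial ((1 + i) - 1)))
          * v (1 + i) (m + 1 + (1 + i))
      = (c i + e i) * W i := by
    intro i _
    rw [show (1 + i) - 1 = i from by omega, show m + 1 + (1 + i) = m + i + 2 from by omega,
      show 1 + i = i + 1 from by omega, Nat.choose_succ_succ' m i]
    simp only [hW, hc, he]
    push_cast
    ring
  rw [Finset.sum_congr rfl hR]
  have hsplit : ∑ i ∈ Finset.range (m + 1), (c i + e i) * W i
      = (∑ i ∈ Finset.range (m + 1), c i * W i) + ∑ i ∈ Finset.range (m + 1), e i * W i := by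
    rw [← Finset.sum_add_distrib]
    exact Finset.sum_congr rfl fun i _ => by ring
  have hcm : c m = 0 := by
    simp [hc, Nat.choose_succ_self]
  rw [hsplit, Finset.sum_range_succ (fun i => c i * W i), hcm, he0]
  ring

end Stmt6Aux

namespace Stmt6Aux

variable {β γ : ℝ}

/-- The claimed form of the `m`-th derivative. -/
def Φ (g : ℝ → ℝ) (β γ : ℝ) (m : ℕ) : ℝ → ℝ := fun x =>
  iteratedDerivWithin m g (Ici 0) (φ β γ x 1) + iteratedDerivWithin m g (Ici 0) (φ β γ x 0) +
  ∑ j ∈ Finset.Icc 1 m, ((m.choose j : ℝ) * β ^ (2 * j) / (Nat.factorial (j - 1))) *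
    ∫ u in (0:ℝ)..1, iteratedDerivWithin (m + j) g (Ici 0) (φ β γ x u) * (u - u ^ 2) ^ (j - 1)

section Main

variable {N : ℕ} {g : ℝ → ℝ} (hg : ContDiffOn ℝ (2 * N : ℕ) g (Set.Ici 0))

include hg

lemma Dcont {k : ℕ} (hk : k ≤ 2 * N) :
    ContinuousOn (iteratedDerivWithin k g (Ici 0)) (Ici 0) :=
  hg.continuousOn_iteratedDerivWithin (by exact_mod_cast hk) (uniqueDiffOn_Ici 0)

lemma Dderiv {k : ℕ} (hk : k < 2 * N) :
    ∀ y ∈ Ici (0:ℝ), HasDerivWithinAt (iteratedDerivWithin k g (Ici 0))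
      (iteratedDerivWithin (k + 1) g (Ici 0) y) (Ici 0) y := by
  intro y hy
  have hdiff := hg.differentiableOn_iteratedDerivWithin (m := k)
    (by exact_mod_cast hk) (uniqueDiffOn_Ici 0)
  have h2 := (hdiff y hy).hasDerivWithinAt
  rwa [iteratedDerivWithin_succ]

lemma contPhi (hβ : 0 ≤ β) (hγ : β ^ 2 / 4 ≤ γ) {m : ℕ} (hm : m ≤ N) :
    ContinuousOn (Φ g β γ m) (Ici 0) := by
  unfold Φ
  refine ContinuousOn.add (ContinuousOn.add ?_ ?_) ?_
  · exact cont_integrand_x hβ hγ (Dcont hg (by omega)) (by norm_num)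
  · exact cont_integrand_x hβ hγ (Dcont hg (by omega)) (by norm_num)
  · apply continuousOn_finset_sum
    intro j hj
    simp only [Finset.mem_Icc] at hj
    exact continuousOn_const.mul
      (contT hβ hγ (Dcont hg (by omega)) (weight_cont (j - 1)))

lemma derivPhi (hβ : 0 ≤ β) (hγ : β ^ 2 / 4 ≤ γ) {m : ℕ} (hm : m < N) :
    ∀ x ∈ Ici (0:ℝ), HasDerivWithinAt (Φ g β γ m) (Φ g β γ (m + 1) x) (Ici 0) x := by
  intro x hx
  have hψ := hasDerivWithinAt_psi hβ hγ (Dcont hg (by omega)) (Dcont hg (by omega))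
    (Dcont hg (by omega)) (Dderiv hg (k := m) (by omega)) (Dderiv hg (k := m + 1) (by omega))
    x hx
  have hT : HasDerivWithinAt
      (fun x => ∑ j ∈ Finset.Icc 1 m,
        ((m.choose j : ℝ) * β ^ (2 * j) / (Nat.factorial (j - 1))) *
          ∫ u in (0:ℝ)..1, iteratedDerivWithin (m + j) g (Ici 0) (φ β γ x u)
            * (u - u ^ 2) ^ (j - 1))
      (∑ j ∈ Finset.Icc 1 m,
        ((m.choose j : ℝ) * β ^ (2 * j) / (Nat.factorial (j - 1))) *
          ((∫ u in (0:ℝ)..1, iteratedDerivWithin (m + j + 1) g (Ici 0) (φ β γ x u)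
              * (u - u ^ 2) ^ (j - 1))
            + (β ^ 2 / (j : ℝ)) * ∫ u in (0:ℝ)..1,
                iteratedDerivWithin (m + j + 2) g (Ici 0) (φ β γ x u) * (u - u ^ 2) ^ j))
      (Ici 0) x := by
    apply HasDerivWithinAt.fun_sum
    intro j hj
    simp only [Finset.mem_Icc] at hj
    have := hasDerivWithinAt_T hβ hγ (Dcont hg (by omega)) (Dcont hg (by omega))
      (Dcont hg (by omega)) (Dderiv hg (k := m + j) (by omega))
      (Dderiv hg (k := m + j + 1) (by omega)) hj.1 x hx
    have h2 : m + j + 1 + 1 = m + j + 2 := by omega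
    rw [h2] at this
    exact this.const_mul _
  have hcomb := (hψ.add hT)
  have hval : (iteratedDerivWithin (m + 1) g (Ici 0) (φ β γ x 1)
        + iteratedDerivWithin (m + 1) g (Ici 0) (φ β γ x 0)
        + β ^ 2 * ∫ u in (0:ℝ)..1,
            iteratedDerivWithin (m + 2) g (Ici 0) (φ β γ x u) * (u - u ^ 2) ^ 0)
      + (∑ j ∈ Finset.Icc 1 m,
        ((m.choose j : ℝ) * β ^ (2 * j) / (Nat.factorial (j - 1))) *
          ((∫ u in (0:ℝ)..1, iteratedDerivWithin (m + j + 1) g (Ici 0) (φ β γ x u)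
              * (u - u ^ 2) ^ (j - 1))
            + (β ^ 2 / (j : ℝ)) * ∫ u in (0:ℝ)..1,
                iteratedDerivWithin (m + j + 2) g (Ici 0) (φ β γ x u) * (u - u ^ 2) ^ j))
      = Φ g β γ (m + 1) x := by
    have hkey := sum_identity β m (fun j k => ∫ u in (0:ℝ)..1,
      iteratedDerivWithin k g (Ici 0) (φ β γ x u) * (u - u ^ 2) ^ (j - 1))
    simp only [Nat.add_sub_cancel, Nat.sub_self] at hkey
    unfold Φ
    rw [← hkey]
    ring
  rw [← hval]
  unfold Φ
  exact hcomb

end Main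

end Stmt6Aux

end

open Set Real MeasureTheory intervalIntegral Stmt6Aux in
/-- Let `g : [0,∞) → ℝ` be `C^{2n}`, `β ≥ 0`, `γ ≥ β²/4`, and
`ψ_g(x) = g(x + β√x + γ) + g(x - β√x + γ)`.  Then `ψ_g` is `C^n` on `[0,∞)` and
`ψ_g^{(n)}(x) = ψ_{g^{(n)}}(x) + ∑_{j=1}^n C(n,j) β^{2j}
  ∫_0^1 g^{(n+j)}(x + β(2u-1)√x + γ) (u-u²)^{j-1}/(j-1)! du`. -/
theorem stmt6 (n : ℕ) (g : ℝ → ℝ) (hg : ContDiffOn ℝ (2 * n) g (Set.Ici 0))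
    (β γ : ℝ) (hβ : 0 ≤ β) (hγ : β ^ 2 / 4 ≤ γ) :
    ContDiffOn ℝ n
        (fun x => g (x + β * Real.sqrt x + γ) + g (x - β * Real.sqrt x + γ)) (Set.Ici 0) ∧
    ∀ x ∈ Set.Ici (0 : ℝ),
      iteratedDerivWithin n
          (fun x => g (x + β * Real.sqrt x + γ) + g (x - β * Real.sqrt x + γ)) (Set.Ici 0) x =
        (iteratedDerivWithin n g (Set.Ici 0) (x + β * Real.sqrt x + γ) +
            iteratedDerivWithin n g (Set.Ici 0) (x - β * Real.sqrt x + γ)) +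
          ∑ j ∈ Finset.Icc 1 n, (Nat.choose n j : ℝ) * β ^ (2 * j) *
            ∫ u in (0 : ℝ)..1,
              iteratedDerivWithin (n + j) g (Set.Ici 0)
                  (x + β * (2 * u - 1) * Real.sqrt x + γ) *
                ((u - u ^ 2) ^ (j - 1) / (Nat.factorial (j - 1) : ℝ)) := by
  have hg' : ContDiffOn ℝ (2 * n : ℕ) g (Set.Ici 0) := hg
  have hUD : UniqueDiffOn ℝ (Ici (0:ℝ)) := uniqueDiffOn_Ici 0
  have hψeq : (fun x => g (x + β * Real.sqrt x + γ) + g (x - β * Real.sqrt x + γ))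
      = Φ g β γ 0 := by
    funext x
    simp only [Φ, Finset.Icc_eq_empty (by omega : ¬ (1:ℕ) ≤ 0), Finset.sum_empty, add_zero,
      iteratedDerivWithin_zero]
    rw [show φ β γ x 1 = x + β * Real.sqrt x + γ by unfold φ; ring,
      show φ β γ x 0 = x - β * Real.sqrt x + γ by unfold φ; ring]
  have hiter : ∀ m, m ≤ n → ∀ x ∈ Ici (0:ℝ),
      iteratedDerivWithin m (Φ g β γ 0) (Ici 0) x = Φ g β γ m x := by
    intro m
    induction m with
    | zero => intro _ x _; rw [iteratedDerivWithin_zero]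
    | succ m ih =>
      intro hm x hx
      rw [iteratedDerivWithin_succ]
      have h1 : derivWithin (iteratedDerivWithin m (Φ g β γ 0) (Ici 0)) (Ici 0) x
          = derivWithin (Φ g β γ m) (Ici 0) x :=
        derivWithin_congr (fun y hy => ih (by omega) y hy) (ih (by omega) x hx)
      rw [h1, (derivPhi hg' hβ hγ (by omega) x hx).derivWithin (hUD x hx)]
  have hCD : ∀ k m : ℕ, m + k ≤ n → ContDiffOn ℝ (k : ℕ) (Φ g β γ m) (Ici 0) := by
    intro k
    induction k with
    | zero => intro m hm; exact contDiffOn_zero.mpr (contPhi hg' hβ hγ (by omega))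
    | succ k ih =>
      intro m hm
      rw [show ((k + 1 : ℕ) : WithTop ℕ∞) = (k : ℕ) + 1 by push_cast; rfl]
      refine (contDiffOn_succ_iff_derivWithin hUD).mpr ⟨?_, ?_, ?_⟩
      · exact fun x hx => (derivPhi hg' hβ hγ (by omega) x hx).differentiableWithinAt
      · intro h; exact absurd h (by simp)
      · exact (ih (m + 1) (by omega)).congr
          fun x hx => (derivPhi hg' hβ hγ (by omega) x hx).derivWithin (hUD x hx)
  constructor
  · exact (hCD n 0 (by omega)).congr fun x _ => congrFun hψeq x
  · intro x hx
    rw [hψeq, hiter n le_rfl x hx]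
    simp only [Φ]
    rw [show φ β γ x 1 = x + β * Real.sqrt x + γ by unfold φ; ring,
      show φ β γ x 0 = x - β * Real.sqrt x + γ by unfold φ; ring]
    congr 1
    apply Finset.sum_congr rfl
    intro j hj
    have : (∫ u in (0:ℝ)..1,
        iteratedDerivWithin (n + j) g (Set.Ici 0) (x + β * (2 * u - 1) * Real.sqrt x + γ) *
          ((u - u ^ 2) ^ (j - 1) / (Nat.factorial (j - 1) : ℝ)))
        = (∫ u in (0:ℝ)..1,
        iteratedDerivWithin (n + j) g (Set.Ici 0) (x + β * (2 * u - 1) * Real.sqrt x + γ) *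
          (u - u ^ 2) ^ (j - 1)) / (Nat.factorial (j - 1) : ℝ) := by
      rw [← intervalIntegral.integral_div]
      apply intervalIntegral.integral_congr
      intro u _
      ring
    rw [this]
    unfold φ
    ring
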